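/- Let $A=[a_{i,j}]_{1\le i,j\le n}$ be a matrix over a commutative ring such that $a_{i,j}=0$ whenever $i+j$ is an even number greater than two. If $n=2m$ for some positive integer $m$, then $\det(A)=(-1)^m\det[a_{2i,2j-1}]_{1\le i,j\le m}\cdot\det[a_{2i-1,2j}]_{1\le i,j\le m}$. -/

import Mathlib

open Matrix

lemma castZMod2_odd {n : ℕ} (h : n % 2 = 1) : ((n : ℕ) : ZMod 2) = 1 := by
  rw [← ZMod.natCast_mod n 2, h, Nat.cast_one]

lemma detJ {R : Type*} [CommRing R] (m : ℕ) :
    (Matrix.fromBlocks (0 : Matrix (Fin m) (Fin m) R) (1 : Matrix (Fin m) (Fin m) R)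
      (1 : Matrix (Fin m) (Fin m) R) (0 : Matrix (Fin m) (Fin m) R)).det = (-1) ^ m := by
  have hdecomp : Matrix.fromBlocks (0 : Matrix (Fin m) (Fin m) R) 1 1 0 =
      (Matrix.fromBlocks 1 1 0 1 : Matrix (Fin m ⊕ Fin m) (Fin m ⊕ Fin m) R) *
        (Matrix.fromBlocks 1 0 (-1) 1 : Matrix (Fin m ⊕ Fin m) (Fin m ⊕ Fin m) R) *
        (Matrix.fromBlocks 1 1 0 1 : Matrix (Fin m ⊕ Fin m) (Fin m ⊕ Fin m) R) *
        (Matrix.fromBlocks (-1) 0 0 1 : Matrix (Fin m ⊕ Fin m) (Fin m ⊕ Fin m) R) := by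
    simp only [Matrix.fromBlocks_multiply]
    norm_num
  rw [hdecomp, Matrix.det_mul, Matrix.det_mul, Matrix.det_mul,
    Matrix.det_fromBlocks_zero₂₁, Matrix.det_fromBlocks_zero₁₂,
    Matrix.det_fromBlocks_zero₁₂, Matrix.det_one]
  simp [Matrix.det_neg, Fintype.card_fin]

lemma det_antidiag {R : Type*} [CommRing R] {m : ℕ}
    (B C : Matrix (Fin m) (Fin m) R) :
    (Matrix.fromBlocks (0 : Matrix (Fin m) (Fin m) R) B C 0).det
      = (-1) ^ m * (B.det * C.det) := by
  have h : Matrix.fromBlocks (0 : Matrix (Fin m) (Fin m) R) B C 0 =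
      (Matrix.fromBlocks B 0 0 C : Matrix (Fin m ⊕ Fin m) (Fin m ⊕ Fin m) R) *
        (Matrix.fromBlocks 0 1 1 0 : Matrix (Fin m ⊕ Fin m) (Fin m ⊕ Fin m) R) := by
    simp [Matrix.fromBlocks_multiply]
  rw [h, Matrix.det_mul, Matrix.det_fromBlocks_zero₂₁, detJ]
  ring

/-- The parity interleaving equivalence `Fin m ⊕ Fin m ≃ Fin (2 * m)`. -/
def parityEquiv (m : ℕ) : Fin m ⊕ Fin m ≃ Fin (2 * m) where
  toFun := Sum.elim (fun j => ⟨2 * (j : ℕ), by omega⟩)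
    (fun j => ⟨2 * (j : ℕ) + 1, by omega⟩)
  invFun k := if (k : ℕ) % 2 = 0 then Sum.inl ⟨(k : ℕ) / 2, by have := k.isLt; omega⟩
    else Sum.inr ⟨(k : ℕ) / 2, by have := k.isLt; omega⟩
  left_inv := by
    rintro (j | j)
    · dsimp only [Sum.elim_inl]
      rw [if_pos (show (2 * (j : ℕ)) % 2 = 0 by omega)]
      exact congrArg Sum.inl (Fin.ext (show 2 * (j : ℕ) / 2 = (j : ℕ) by omega))
    · dsimp only [Sum.elim_inr]
      rw [if_neg (show ¬(2 * (j : ℕ) + 1) % 2 = 0 by omega)]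
      exact congrArg Sum.inr (Fin.ext (show (2 * (j : ℕ) + 1) / 2 = (j : ℕ) by omega))
  right_inv k := by
    by_cases h : (k : ℕ) % 2 = 0
    · dsimp only
      rw [if_pos h]
      exact Fin.ext (show 2 * ((k : ℕ) / 2) = (k : ℕ) by omega)
    · dsimp only
      rw [if_neg h]
      exact Fin.ext (show 2 * ((k : ℕ) / 2) + 1 = (k : ℕ) by omega)


/-- If `A = [a_{i,j}]_{1 ≤ i,j ≤ n}` (rows/columns indexed `1..n`, realized as
`Fin n` with `i` standing for the `(i+1)`-st row/column) is a matrix over a commutative ring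
with `a_{i,j} = 0` whenever `i + j` is an even number greater than two, and `n = 2m` with
`m ≥ 1`, then `det(A) = (-1)^m det[a_{2i,2j-1}]_{1≤i,j≤m} * det[a_{2i-1,2j}]_{1≤i,j≤m}`. -/
theorem stmt1 {R : Type*} [CommRing R] (m : ℕ) (hm : 0 < m)
    (A : Matrix (Fin (2 * m)) (Fin (2 * m)) R)
    (hA : ∀ i j : Fin (2 * m), Even (((i : ℕ) + 1) + ((j : ℕ) + 1)) →
      ((i : ℕ) + 1) + ((j : ℕ) + 1) > 2 → A i j = 0) :
    A.det =
      (-1) ^ m *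
      ((Matrix.of fun i j : Fin m =>
          A ⟨2 * (i : ℕ) + 1, by have := i.isLt; omega⟩
            ⟨2 * (j : ℕ), by have := j.isLt; omega⟩).det *
      (Matrix.of fun i j : Fin m =>
          A ⟨2 * (i : ℕ), by have := i.isLt; omega⟩
            ⟨2 * (j : ℕ) + 1, by have := j.isLt; omega⟩).det) := by
  have hpos : 0 < 2 * m := by omega
  set z0 : Fin (2 * m) := ⟨0, hpos⟩ with hz0def
  have hz0val : (z0 : ℕ) = 0 := rfl
  -- the version of `A` with the `(1,1)` entry replaced by `0`
  set A' : Matrix (Fin (2 * m)) (Fin (2 * m)) R :=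
    Matrix.of (fun i j => if (i : ℕ) + (j : ℕ) = 0 then 0 else A i j) with hA'
  have hzero : ∀ i j : Fin (2 * m), ((i : ℕ) + (j : ℕ)) % 2 = 0 → A' i j = 0 := by
    intro i j hij
    show (if (i : ℕ) + (j : ℕ) = 0 then 0 else A i j) = 0
    split
    · rfl
    · apply hA
      · rw [Nat.even_iff]; omega
      · omega
  have hne : ∀ i j : Fin (2 * m), (i : ℕ) + (j : ℕ) ≠ 0 → A' i j = A i j := by
    intro i j h
    show (if (i : ℕ) + (j : ℕ) = 0 then 0 else A i j) = A i j
    rw [if_neg h]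
  -- Step 1 : `A` and `A'` have the same determinant
  have step1 : A.det = A'.det := by
    rw [Matrix.det_apply, Matrix.det_apply]
    refine Finset.sum_congr rfl fun σ _ => ?_
    by_cases hσ : σ z0 = z0
    · -- both products are zero
      have hA'zero : A' (σ z0) z0 = 0 := by
        apply hzero
        rw [hσ]
        simp [hz0val]
      have hAzero : ∃ i ∈ Finset.univ, A (σ i) i = 0 := by
        by_contra hcon
        push_neg at hcon
        have key : ∀ i : Fin (2 * m), (i : ℕ) ≠ 0 → (((σ i : ℕ)) + (i : ℕ)) % 2 = 1 := by
          intro i hi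
          by_contra hpar
          exact hcon i (Finset.mem_univ i)
            (hA (σ i) i (by rw [Nat.even_iff]; omega) (by omega))
        have h0 : ∑ i : Fin (2 * m), (((σ i : ℕ) + (i : ℕ) : ℕ) : ZMod 2) = 0 := by
          have hsum : ∑ i : Fin (2 * m), (((σ i : ℕ) + (i : ℕ) : ℕ) : ZMod 2) =
              ∑ i : Fin (2 * m), ((i : ℕ) : ZMod 2) + ∑ i : Fin (2 * m), ((i : ℕ) : ZMod 2) := by
            push_cast
            rw [Finset.sum_add_distrib]
            congr 1
            exact Fintype.sum_equiv σ _ _ fun i => rfl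
          rw [hsum, ← two_mul, show (2 : ZMod 2) = 0 by decide, zero_mul]
        have h1 : ∑ i : Fin (2 * m), (((σ i : ℕ) + (i : ℕ) : ℕ) : ZMod 2) = 1 := by
          rw [← Finset.sum_erase_add _ _ (Finset.mem_univ z0)]
          have hlast : (((σ z0 : ℕ) + (z0 : ℕ) : ℕ) : ZMod 2) = 0 := by
            rw [hσ, hz0val]
            norm_num
          rw [hlast, add_zero]
          rw [Finset.sum_congr rfl (fun i hi => castZMod2_odd (key i (fun h => by
            exact (Finset.mem_erase.mp hi).1 (Fin.ext h))))]
          rw [Finset.sum_const, Finset.card_erase_of_mem (Finset.mem_univ _),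
            Finset.card_univ, Fintype.card_fin, nsmul_eq_mul, mul_one]
          exact castZMod2_odd (by omega)
        rw [h0] at h1
        exact one_ne_zero h1.symm
      obtain ⟨i, hi, hAi⟩ := hAzero
      rw [Finset.prod_eq_zero (f := fun i => A (σ i) i) hi hAi,
        Finset.prod_eq_zero (f := fun i => A' (σ i) i) (Finset.mem_univ z0) hA'zero]
    · congr 1
      refine Finset.prod_congr rfl fun i _ => (hne (σ i) i fun hc => ?_).symm
      apply hσ
      have h1 : (σ i : ℕ) = 0 := by omega
      have h2 : (i : ℕ) = 0 := by omega
      have hi : i = z0 := Fin.ext h2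
      rw [← hi]
      exact Fin.ext (by omega)
  -- Step 2 : the reindexed `A'` is block antidiagonal
  have step2 : A'.submatrix (parityEquiv m) (parityEquiv m) =
      Matrix.fromBlocks 0
        (Matrix.of fun i j : Fin m =>
          A ⟨2 * (i : ℕ), by have := i.isLt; omega⟩
            ⟨2 * (j : ℕ) + 1, by have := j.isLt; omega⟩)
        (Matrix.of fun i j : Fin m =>
          A ⟨2 * (i : ℕ) + 1, by have := i.isLt; omega⟩
            ⟨2 * (j : ℕ), by have := j.isLt; omega⟩) 0 := by
    ext i j
    cases i with
    | inl i =>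
      cases j with
      | inl j =>
        have : A' ⟨2 * (i : ℕ), by have := i.isLt; omega⟩
            ⟨2 * (j : ℕ), by have := j.isLt; omega⟩ = 0 := hzero _ _ (by show (2 * (i : ℕ) + 2 * (j : ℕ)) % 2 = 0; omega)
        simpa [parityEquiv] using this
      | inr j =>
        have : A' ⟨2 * (i : ℕ), by have := i.isLt; omega⟩
            ⟨2 * (j : ℕ) + 1, by have := j.isLt; omega⟩ =
            A ⟨2 * (i : ℕ), by have := i.isLt; omega⟩
            ⟨2 * (j : ℕ) + 1, by have := j.isLt; omega⟩ :=
            hne _ _ (by show 2 * (i : ℕ) + (2 * (j : ℕ) + 1) ≠ 0; omega)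
        simpa [parityEquiv] using this
    | inr i =>
      cases j with
      | inl j =>
        have : A' ⟨2 * (i : ℕ) + 1, by have := i.isLt; omega⟩
            ⟨2 * (j : ℕ), by have := j.isLt; omega⟩ =
            A ⟨2 * (i : ℕ) + 1, by have := i.isLt; omega⟩
            ⟨2 * (j : ℕ), by have := j.isLt; omega⟩ :=
            hne _ _ (by show 2 * (i : ℕ) + 1 + 2 * (j : ℕ) ≠ 0; omega)
        simpa [parityEquiv] using this
      | inr j =>
        have : A' ⟨2 * (i : ℕ) + 1, by have := i.isLt; omega⟩
            ⟨2 * (j : ℕ) + 1, by have := j.isLt; omega⟩ = 0 := hzero _ _ (by show (2 * (i : ℕ) + 1 + (2 * (j : ℕ) + 1)) % 2 = 0; omega)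
        simpa [parityEquiv] using this
  calc A.det = A'.det := step1
    _ = (A'.submatrix (parityEquiv m) (parityEquiv m)).det :=
        (Matrix.det_submatrix_equiv_self _ _).symm
    _ = _ := by rw [step2, det_antidiag]; ring
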